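/- A graph G is strong 3-chromatic-choosable if and only if G is an odd cycle. -/

import Mathlib

open SimpleGraph Finset

section ListColoringDefs

variable {V : Type*}

/-- `f` is a proper coloring of `G` choosing each color from the list `L v`. -/
def IsProperListColoring (G : SimpleGraph V) (L : V → Finset ℕ) (f : V → ℕ) : Prop :=
  (∀ v, f v ∈ L v) ∧ ∀ u v, G.Adj u v → f u ≠ f v

/-- `G` admits a proper coloring from the list assignment `L`. -/
def ListColorable (G : SimpleGraph V) (L : V → Finset ℕ) : Prop :=
  ∃ f, IsProperListColoring G L f

/-- `G` is colorable from every list assignment with lists of size at least `m`. -/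
def Choosable (G : SimpleGraph V) (m : ℕ) : Prop :=
  ∀ L : V → Finset ℕ, (∀ v, m ≤ (L v).card) → ListColorable G L

/-- The list chromatic number of `G`. -/
noncomputable def listChromaticNumber (G : SimpleGraph V) : ℕ :=
  sInf { m | Choosable G m }

/-- `G` is strong `k`-chromatic-choosable: `χ(G) = k` and every `(k-1)`-assignment
from which `G` is not colorable is constant. -/
def StrongCC (G : SimpleGraph V) (k : ℕ) : Prop :=
  G.chromaticNumber = (k : ℕ∞) ∧
    ∀ L : V → Finset ℕ, (∀ v, (L v).card = k - 1) → ¬ ListColorable G L →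
      ∀ u v : V, L u = L v

/-- The number of proper `L`-colorings of `G`. -/
noncomputable def numColorings (G : SimpleGraph V) (L : V → Finset ℕ) : ℕ :=
  Set.ncard { f : V → ℕ | IsProperListColoring G L f }

/-- The list color function `P_ℓ(G,k)`: the minimum number of proper `L`-colorings
over all `k`-assignments `L`. -/
noncomputable def listColorFunction (G : SimpleGraph V) (k : ℕ) : ℕ :=
  sInf { n | ∃ L : V → Finset ℕ, (∀ v, (L v).card = k) ∧ n = numColorings G L }

/-- The chromatic polynomial `P(G,k)`: the number of proper colorings with colors
from `{0, …, k-1}`. -/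
noncomputable def chromPoly (G : SimpleGraph V) (k : ℕ) : ℕ :=
  numColorings G (fun _ => Finset.range k)

/-- The join `G ∨ K_p` of `G` with the complete graph on `p` vertices. -/
def joinK (G : SimpleGraph V) (p : ℕ) : SimpleGraph (V ⊕ Fin p) :=
  SimpleGraph.fromRel (fun a b =>
    match a, b with
    | Sum.inl u, Sum.inl v => G.Adj u v
    | _, _ => True)

/-- The star `K_{1,s}`: center `none` adjacent to the `s` leaves. -/
def starGraph (s : ℕ) : SimpleGraph (Option (Fin s)) :=
  SimpleGraph.fromRel (fun a _ => a = none)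

/-- The cycle graph `C_n` on `Fin n` (for `n ≥ 3`). -/
def cycGraph (n : ℕ) : SimpleGraph (Fin n) :=
  SimpleGraph.fromRel (fun a b => b.val = (a.val + 1) % n)

end ListColoringDefs

section Stmt5Aux

open SimpleGraph Walk
open Fin.CommRing

variable {V : Type*}

/-- Pick an element of a nonempty finset. -/
noncomputable def pick (s : Finset ℕ) : ℕ := if h : s.Nonempty then h.choose else 0

lemma pick_mem {s : Finset ℕ} (h : s.Nonempty) : pick s ∈ s := by
  rw [pick, dif_pos h]; exact h.choose_spec

lemma sdiff_nonempty_of_two {s : Finset ℕ} (hs : s.card = 2) (y : ℕ) :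
    (s \ {y}).Nonempty := by
  have h1 : 1 < s.card := by omega
  obtain ⟨a, ha, b, hb, hab⟩ := Finset.one_lt_card.1 h1
  rcases eq_or_ne a y with rfl | h
  · exact ⟨b, Finset.mem_sdiff.2 ⟨hb, by simpa using hab.symm⟩⟩
  · exact ⟨a, Finset.mem_sdiff.2 ⟨ha, by simpa using h⟩⟩

/-- Parity along a walk whose support is colored with two colors. -/
lemma parity_walk {G : SimpleGraph V} {f : V → ℕ}
    (hf : ∀ a b, G.Adj a b → f a ≠ f b) {u v : V} (p : G.Walk u v)
    (h2 : ∀ x ∈ p.support, f x = 0 ∨ f x = 1) : (f u = f v ↔ Even p.length) := by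
  induction p with
  | nil => simp
  | @cons u w v h q ih =>
    have hu : f u = 0 ∨ f u = 1 := h2 u (by simp)
    have hw : f w = 0 ∨ f w = 1 := h2 w (by simp)
    have hv : f v = 0 ∨ f v = 1 := h2 v (by simp)
    have huw : f u ≠ f w := hf _ _ h
    have ihq := ih (fun x hx => h2 x (by simp [hx]))
    rw [Walk.length_cons, Nat.even_add_one, ← ihq]
    rcases hu with hu | hu <;> rcases hw with hw | hw <;> rcases hv with hv | hv <;> omega

lemma no_odd_closed {G : SimpleGraph V} {f : V → ℕ}
    (hf : ∀ a b, G.Adj a b → f a ≠ f b) {v : V} (p : G.Walk v v)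
    (hodd : Odd p.length) (h2 : ∀ x ∈ p.support, f x = 0 ∨ f x = 1) : False := by
  have := (parity_walk hf p h2).1 rfl
  exact (Nat.not_even_iff_odd.2 hodd) this

lemma exists_odd_closed {G : SimpleGraph V} (h : ¬ G.Colorable 2) :
    ∃ (v : V) (p : G.Walk v v), Odd p.length := by
  classical
  by_contra hno
  push_neg at hno
  apply h
  have hrep : ∀ v : V, G.Reachable ((G.connectedComponentMk v).out) v := by
    intro v
    exact ConnectedComponent.exact (Quot.out_eq _)
  set F : V → ℕ := fun v => ((hrep v).some).length with hF
  refine ⟨SimpleGraph.Coloring.mk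
    (fun v => if Even (F v) then (0 : Fin 2) else 1) ?_⟩
  intro a b hab hfab
  have hcomp : G.connectedComponentMk a = G.connectedComponentMk b :=
    ConnectedComponent.sound hab.reachable
  set r := (G.connectedComponentMk a).out with hr
  have w1 : G.Walk r a := (hrep a).some
  have hw2 : G.Walk ((G.connectedComponentMk b).out) b := (hrep b).some
  -- closed walk at r
  have hco : (G.connectedComponentMk b).out = r := by rw [hr, hcomp]
  let q : G.Walk r r :=
    ((hrep a).some).append (Walk.cons hab (((hrep b).some).reverse.copy rfl hco))
  have hql : q.length = F a + (1 + F b) := by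
    simp [q, Walk.length_append, Walk.length_cons, Walk.length_reverse, hF]
    omega
  have hqe : ¬ Odd q.length := hno r q
  rw [hql] at hqe
  have hpar : ¬ (Even (F a) ↔ Even (F b)) := by
    simp only [Nat.not_odd_iff_even] at hqe
    simp only [Nat.even_iff] at hqe ⊢
    omega
  by_cases h1 : Even (F a) <;> by_cases h2 : Even (F b) <;>
    simp [h1, h2] at hfab hpar

/-- Take the first `n` steps of a walk. -/
def wtake {G : SimpleGraph V} : {u v : V} → (p : G.Walk u v) → (n : ℕ) →
    G.Walk u (p.getVert n)
  | _, _, p, 0 => Walk.nil.copy rfl (p.getVert_zero).symm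
  | _, _, Walk.nil, _+1 => Walk.nil
  | _, _, Walk.cons h q, n+1 => Walk.cons h (wtake q n)

lemma length_wtake {G : SimpleGraph V} {u v : V} (p : G.Walk u v) (n : ℕ) :
    (wtake p n).length = min n p.length := by
  induction p generalizing n with
  | nil => cases n <;> simp [wtake]
  | cons h q ih =>
    cases n with
    | zero => simp [wtake]
    | succ m =>
      show (wtake q m).length + 1 = min (m + 1) (q.length + 1)
      rw [ih]; omega

lemma getVert_copy' {G : SimpleGraph V} {u v u' v' : V} (p : G.Walk u v)
    (hu : u = u') (hv : v = v') (i : ℕ) :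
    (p.copy hu hv).getVert i = p.getVert i := by subst hu; subst hv; rfl

lemma length_drop' {G : SimpleGraph V} {u v : V} (p : G.Walk u v) (n : ℕ) :
    (p.drop n).length = p.length - n := by
  induction p generalizing n with
  | nil => cases n <;> simp [Walk.drop]
  | cons h q ih =>
    cases n with
    | zero => simp [Walk.drop]
    | succ m => simp [Walk.drop, ih]

lemma getVert_drop' {G : SimpleGraph V} {u v : V} (p : G.Walk u v) (n i : ℕ) :
    (p.drop n).getVert i = p.getVert (n + i) := by
  induction p generalizing n with
  | nil =>
    cases n <;>
      simp [Walk.drop, getVert_copy', Walk.getVert_of_length_le, Nat.zero_le]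
  | cons h q ih =>
    cases n with
    | zero => simp [Walk.drop, getVert_copy']
    | succ m =>
      simp only [Walk.drop, getVert_copy', ih]
      rw [show m + 1 + i = (m + i) + 1 from by omega]
      exact (ih m).trans (by rw [Walk.getVert_cons_succ])

lemma fin_val_add_one {n : ℕ} [NeZero n] (hn : 3 ≤ n) (a : Fin n) :
    (a + 1).val = (a.val + 1) % n := by
  have h1 : (1 : Fin n).val = 1 := by
    rw [Fin.val_one']
    exact Nat.mod_eq_of_lt (by omega)
  rw [Fin.val_add, h1]

lemma cyc_adj_iff {n : ℕ} [NeZero n] (hn : 3 ≤ n) (a b : Fin n) :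
    (cycGraph n).Adj a b ↔ (b = a + 1 ∨ a = b + 1) := by
  have hner : ∀ x : Fin n, x ≠ x + 1 := by
    intro x hx
    have hval := congrArg Fin.val hx
    rw [fin_val_add_one hn] at hval
    have hx2 := x.isLt
    rcases Nat.lt_or_ge (x.val + 1) n with hlt | hge
    · rw [Nat.mod_eq_of_lt hlt] at hval; omega
    · have hxe : x.val + 1 = n := by omega
      rw [hxe, Nat.mod_self] at hval; omega
  rw [cycGraph, SimpleGraph.fromRel_adj]
  constructor
  · rintro ⟨hne, h | h⟩
    · left; exact Fin.ext (by rw [fin_val_add_one hn, ← h])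
    · right; exact Fin.ext (by rw [fin_val_add_one hn, ← h])
  · rintro (rfl | rfl)
    · exact ⟨hner a, Or.inl (by rw [fin_val_add_one hn])⟩
    · exact ⟨fun he => hner b he.symm, Or.inr (by rw [fin_val_add_one hn])⟩

lemma cyc_adj_succ {n : ℕ} [NeZero n] (hn : 3 ≤ n) (a : Fin n) :
    (cycGraph n).Adj a (a + 1) := (cyc_adj_iff hn a (a + 1)).2 (Or.inl rfl)

/-- Walk of length `k` in the cycle graph from `0` to `k`. -/
def cwalk {n : ℕ} [NeZero n] (hn : 3 ≤ n) : (k : ℕ) →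
    (cycGraph n).Walk (0 : Fin n) ((k : ℕ) : Fin n)
  | 0 => Walk.nil.copy rfl (by simp)
  | k+1 => ((cwalk hn k).concat (cyc_adj_succ hn _)).copy rfl (by push_cast; ring)

lemma length_cwalk {n : ℕ} [NeZero n] (hn : 3 ≤ n) (k : ℕ) :
    (cwalk hn k).length = k := by
  induction k with
  | zero => simp [cwalk]
  | succ m ih => simp [cwalk, Walk.length_concat, ih]

lemma cyc_not_col2 {n : ℕ} (hn : 3 ≤ n) (hodd : Odd n) :
    ¬ (cycGraph n).Colorable 2 := by
  haveI : NeZero n := ⟨by omega⟩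
  rintro ⟨C⟩
  set f : Fin n → ℕ := fun x => (C x).val with hf
  have hfp : ∀ a b, (cycGraph n).Adj a b → f a ≠ f b := by
    intro a b h he
    exact C.valid h (Fin.ext he)
  let p : (cycGraph n).Walk (0 : Fin n) (0 : Fin n) :=
    (cwalk (n := n) hn n).copy rfl (by simp)
  have hl : p.length = n := by simp [p, length_cwalk]
  exact no_odd_closed hfp p (by rw [hl]; exact hodd)
    (fun x _ => by have h := (C x).isLt; simp only [hf]; omega)

lemma cyc_col3 {n : ℕ} (hn : 3 ≤ n) : (cycGraph n).Colorable 3 := by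
  haveI : NeZero n := ⟨by omega⟩
  refine ⟨SimpleGraph.Coloring.mk
    (fun i => (⟨if i.val = n - 1 then 2 else i.val % 2, by split <;> omega⟩ : Fin 3)) ?_⟩
  intro a b hab
  rw [cyc_adj_iff hn] at hab
  have key : ∀ x : Fin n,
      (⟨if x.val = n - 1 then 2 else x.val % 2, by split <;> omega⟩ : Fin 3) ≠
      (⟨if (x+1).val = n - 1 then 2 else (x+1).val % 2, by split <;> omega⟩ : Fin 3) := by
    intro x hx
    rw [Fin.mk.injEq] at hx
    have hv : (x + 1).val = (x.val + 1) % n := fin_val_add_one hn x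
    have hx2 := x.isLt
    rcases Nat.lt_or_ge (x.val + 1) n with hlt | hge
    · rw [Nat.mod_eq_of_lt hlt] at hv
      rw [hv] at hx
      split at hx <;> split at hx <;> omega
    · have hxe : x.val + 1 = n := by omega
      rw [hxe, Nat.mod_self] at hv
      rw [hv] at hx
      split at hx <;> split at hx <;> omega
  rcases hab with rfl | rfl
  · exact key a
  · exact (key b).symm

/-- The key list-coloring lemma: a cycle with non-constant 2-lists is colorable. -/
lemma cyc_choosable {n : ℕ} (hn : 3 ≤ n) (L : Fin n → Finset ℕ)
    (hc : ∀ i, (L i).card = 2) (hnc : ∃ a b, L a ≠ L b) :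
    ListColorable (cycGraph n) L := by
  haveI : NeZero n := ⟨by omega⟩
  -- find adjacent vertices with different lists
  have hK : ∃ k : Fin n, L k ≠ L (k + 1) := by
    by_contra hall
    push_neg at hall
    obtain ⟨a, b, hab⟩ := hnc
    have hstep : ∀ j : ℕ, L ((j : ℕ) : Fin n) = L 0 := by
      intro j
      induction j with
      | zero => simp
      | succ m ih =>
        have : ((m + 1 : ℕ) : Fin n) = ((m : ℕ) : Fin n) + 1 := by push_cast; ring
        rw [this, ← hall ((m : ℕ) : Fin n), ih]
    have hallc : ∀ x : Fin n, L x = L 0 := fun x => by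
      have := hstep x.val; rwa [Fin.cast_val_eq_self] at this
    exact hab (by rw [hallc a, hallc b])
  obtain ⟨k, hk⟩ := hK
  have hns : ¬ L k ⊆ L (k + 1) := by
    intro hsub
    exact hk (Finset.eq_of_subset_of_card_le hsub (by rw [hc, hc]))
  obtain ⟨c, hck, hck1⟩ := Finset.not_subset.1 hns
  -- greedy coloring going backwards from k
  let g : ℕ → ℕ := fun j =>
    Nat.rec c (fun j' gj => pick (L (k - ((j' + 1 : ℕ) : Fin n)) \ {gj})) j
  have hg0 : g 0 = c := rfl
  have hgs : ∀ j, g (j + 1) = pick (L (k - ((j + 1 : ℕ) : Fin n)) \ {g j}) :=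
    fun j => rfl
  have hgmem : ∀ j : ℕ, g j ∈ L (k - (j : Fin n)) := by
    intro j
    cases j with
    | zero => simpa [hg0] using hck
    | succ m =>
      rw [hgs]
      have hne : (L (k - ((m + 1 : ℕ) : Fin n)) \ {g m}).Nonempty :=
        sdiff_nonempty_of_two (hc _) _
      exact (Finset.mem_sdiff.1 (pick_mem hne)).1
  have hgne : ∀ j : ℕ, g (j + 1) ≠ g j := by
    intro j
    rw [hgs]
    have hne : (L (k - ((j + 1 : ℕ) : Fin n)) \ {g j}).Nonempty :=
      sdiff_nonempty_of_two (hc _) _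
    have := (Finset.mem_sdiff.1 (pick_mem hne)).2
    simpa using this
  set f : Fin n → ℕ := fun i => g ((k - i).val) with hfdef
  have hfmem : ∀ i, f i ∈ L i := by
    intro i
    have := hgmem ((k - i).val)
    rwa [Fin.cast_val_eq_self, sub_sub_cancel] at this
  have key : ∀ a : Fin n, f a ≠ f (a + 1) := by
    intro a
    set m := (k - (a + 1)).val with hm
    have h1 : k - a = (k - (a + 1)) + 1 := by ring
    have h2 : (k - a).val = (m + 1) % n := by
      rw [h1, fin_val_add_one hn]
    have hmlt : m < n := (k - (a + 1)).isLt
    have hfa1 : f (a + 1) = g m := rfl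
    rcases Nat.lt_or_ge (m + 1) n with hlt | hge
    · have h3 : (k - a).val = m + 1 := by rw [h2, Nat.mod_eq_of_lt hlt]
      have : f a = g (m + 1) := by rw [hfdef]; simp only; rw [h3]
      rw [this, hfa1]
      exact hgne m
    · have hmn : m + 1 = n := by omega
      have h3 : (k - a).val = 0 := by rw [h2, hmn, Nat.mod_self]
      have h4 : k - a = 0 := Fin.ext (by simp [h3])
      have h5 : a = k := (sub_eq_zero.1 h4).symm
      have hfa : f a = c := by
        rw [hfdef]; simp only; rw [h3, hg0]
      intro hcon
      rw [hfa] at hcon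
      have hmem1 : f (a + 1) ∈ L (a + 1) := hfmem (a + 1)
      rw [← hcon, h5] at hmem1
      exact hck1 hmem1
  refine ⟨f, hfmem, ?_⟩
  intro u v huv
  rw [cyc_adj_iff hn] at huv
  rcases huv with rfl | rfl
  · exact key u
  · exact (key v).symm

lemma chrom_eq_three' {W : Type*} {G : SimpleGraph W} (h3 : G.Colorable 3)
    (h2 : ¬ G.Colorable 2) : G.chromaticNumber = ((3 : ℕ) : ℕ∞) := by
  have hle : G.chromaticNumber ≤ ((3 : ℕ) : ℕ∞) := h3.chromaticNumber_le
  refine le_antisymm hle ?_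
  by_contra hlt
  push_neg at hlt
  have hne : G.chromaticNumber ≠ ⊤ := by
    intro htop
    rw [htop] at hle
    exact (ENat.coe_ne_top 3) (top_le_iff.1 hle)
  have hcol := SimpleGraph.colorable_of_chromaticNumber_ne_top hne
  revert hlt hcol
  lift G.chromaticNumber to ℕ using hne with m hm
  intro hlt hcol
  rw [ENat.toNat_coe] at hcol
  have hm3 : m < 3 := by exact_mod_cast hlt
  exact h2 (hcol.mono (by omega))

end Stmt5Aux

open SimpleGraph Walk in
/-- `G` is strong 3-chromatic-choosable iff `G` is an odd cycle. -/
theorem stmt_5 {V : Type*} [Fintype V] (G : SimpleGraph V) :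
    StrongCC G 3 ↔ ∃ n : ℕ, Odd n ∧ 3 ≤ n ∧ Nonempty (G ≃g cycGraph n) := by
  classical
  constructor
  · rintro ⟨hchi, hlist⟩
    have h2 : ¬ G.Colorable 2 := by
      intro hc
      have hle := SimpleGraph.chromaticNumber_le_iff_colorable.2 hc
      rw [hchi] at hle
      have h32 : (3 : ℕ) ≤ 2 := by exact_mod_cast hle
      omega
    obtain ⟨v0, p0, hodd0⟩ := exists_odd_closed h2
    set S : Set ℕ := {m | Odd m ∧ ∃ v : V, ∃ p : G.Walk v v, p.length = m} with hSdef
    have hSne : S.Nonempty := ⟨p0.length, hodd0, v0, p0, rfl⟩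
    set n := sInf S with hndef
    obtain ⟨hoddn, v, w, hwlen⟩ := Nat.sInf_mem hSne
    have hmin : ∀ m, Odd m → (∃ u : V, ∃ p : G.Walk u u, p.length = m) → n ≤ m :=
      fun m hm1 hm2 => Nat.sInf_le ⟨hm1, hm2⟩
    have hne1 : n ≠ 1 := by
      intro h1
      have hadj := w.adj_getVert_succ (show 0 < w.length by omega)
      rw [Walk.getVert_zero] at hadj
      have hg1 : w.getVert (0 + 1) = v := by
        rw [show 0 + 1 = w.length by omega, Walk.getVert_length]
      rw [hg1] at hadj
      exact G.loopless.irrefl v hadj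
    have hn3 : 3 ≤ n := by
      rcases hoddn with ⟨t, ht⟩; omega
    have hspan : ∀ x : V, x ∈ w.support := by
      intro x
      by_contra hx
      set L : V → Finset ℕ :=
        fun u => if u ∈ w.support then ({0, 1} : Finset ℕ) else {2, 3} with hL
      have hcard : ∀ u, (L u).card = 3 - 1 := by
        intro u; rw [hL]; dsimp only; split <;> decide
      have hncol : ¬ ListColorable G L := by
        rintro ⟨f, hfmem, hfprop⟩
        apply no_odd_closed hfprop w (by rw [hwlen]; exact hoddn)
        intro y hy
        have hmy := hfmem y
        rw [hL] at hmy; dsimp only at hmy; rw [if_pos hy] at hmy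
        simp only [Finset.mem_insert, Finset.mem_singleton] at hmy
        exact hmy
      have hLvx := hlist L hcard hncol v x
      rw [hL] at hLvx; dsimp only at hLvx
      rw [if_pos w.start_mem_support, if_neg hx] at hLvx
      exact absurd hLvx (by decide)
    have hinj : ∀ i j : ℕ, i < j → j ≤ n - 1 → w.getVert i ≠ w.getVert j := by
      intro i j hij hjn heq
      have hmid0 : (w.drop i).getVert (j - i) = w.getVert j := by
        rw [getVert_drop']; congr 1; omega
      let w1 : G.Walk (w.getVert i) (w.getVert i) :=
        ((wtake (w.drop i) (j - i)).copy rfl hmid0).copy rfl heq.symm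
      have hw1l : w1.length = j - i := by
        simp only [w1, Walk.length_copy, length_wtake, length_drop', hwlen]
        omega
      let w2 : G.Walk v v := ((wtake w i).copy rfl heq).append (w.drop j)
      have hw2l : w2.length = i + (n - j) := by
        simp only [w2, Walk.length_append, Walk.length_copy, length_wtake,
          length_drop', hwlen]
        omega
      rcases Nat.even_or_odd (j - i) with hev | hod
      · have hodd2 : Odd (i + (n - j)) := by
          rcases hoddn with ⟨t, ht⟩; rcases hev with ⟨s, hs⟩
          rw [Nat.odd_iff]; omega
        have := hmin _ hodd2 ⟨v, w2, hw2l⟩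
        omega
      · have := hmin _ hod ⟨w.getVert i, w1, hw1l⟩
        omega
    have hchord : ∀ i j : ℕ, i < j → j ≤ n - 1 →
        G.Adj (w.getVert i) (w.getVert j) → (j = i + 1 ∨ (i = 0 ∧ j = n - 1)) := by
      intro i j hij hjn hadj
      by_contra hcon
      push_neg at hcon
      obtain ⟨hne1', hne2⟩ := hcon
      have hd2 : 2 ≤ j - i := by omega
      have hdn : j - i ≤ n - 2 := by
        by_contra hdd
        push_neg at hdd
        have hii : i = 0 := by omega
        have hjj : j = n - 1 := by omega
        exact hne2 hii hjj
      have hmid0 : (w.drop i).getVert (j - i) = w.getVert j := by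
        rw [getVert_drop']; congr 1; omega
      let mid : G.Walk (w.getVert i) (w.getVert j) :=
        (wtake (w.drop i) (j - i)).copy rfl hmid0
      let w1 : G.Walk (w.getVert i) (w.getVert i) := mid.concat hadj.symm
      have hw1l : w1.length = (j - i) + 1 := by
        simp only [w1, mid, Walk.length_concat, Walk.length_copy, length_wtake,
          length_drop', hwlen]
        omega
      let w2 : G.Walk v v := (wtake w i).append (Walk.cons hadj (w.drop j))
      have hw2l : w2.length = i + (1 + (n - j)) := by
        simp only [w2, Walk.length_append, Walk.length_cons, length_wtake,
          length_drop', hwlen]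
        omega
      rcases Nat.even_or_odd (j - i) with hev | hod
      · have ho1 : Odd ((j - i) + 1) := by
          rcases hev with ⟨s, hs⟩; rw [Nat.odd_iff]; omega
        have := hmin _ ho1 ⟨w.getVert i, w1, hw1l⟩
        omega
      · have ho2 : Odd (i + (1 + (n - j))) := by
          rcases hod with ⟨s, hs⟩; rcases hoddn with ⟨t, ht⟩
          rw [Nat.odd_iff]; omega
        have := hmin _ ho2 ⟨v, w2, hw2l⟩
        omega
    haveI : NeZero n := ⟨by omega⟩
    set e : Fin n → V := fun i => w.getVert i.val with he
    have heinj : Function.Injective e := by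
      intro i j hij
      by_contra hne'
      have hvne : i.val ≠ j.val := fun hv => hne' (Fin.ext hv)
      rcases Nat.lt_or_ge i.val j.val with hlt | hge
      · exact hinj i.val j.val hlt (by have := j.isLt; omega) hij
      · exact hinj j.val i.val (by omega) (by have := i.isLt; omega) hij.symm
    have hesurj : Function.Surjective e := by
      intro x
      obtain ⟨m, hm, hmle⟩ := Walk.mem_support_iff_exists_getVert.1 (hspan x)
      rcases Nat.lt_or_ge m w.length with hlt | hge
      · exact ⟨⟨m, by omega⟩, hm⟩
      · refine ⟨⟨0, by omega⟩, ?_⟩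
        rw [he]; dsimp only
        rw [Walk.getVert_zero, ← hm, Walk.getVert_of_length_le w hge]
    have hstep : ∀ a : Fin n, G.Adj (e a) (e (a + 1)) := by
      intro a
      have hv : (a + 1).val = (a.val + 1) % n := fin_val_add_one hn3 a
      have halt := a.isLt
      rcases Nat.lt_or_ge (a.val + 1) n with hlt | hge
      · have hv' : (a + 1).val = a.val + 1 := by rw [hv, Nat.mod_eq_of_lt hlt]
        rw [he]; dsimp only; rw [hv']
        exact w.adj_getVert_succ (by omega)
      · have han : a.val = n - 1 := by omega
        have h0 : (a + 1).val = 0 := by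
          rw [hv, show a.val + 1 = n by omega, Nat.mod_self]
        rw [he]; dsimp only; rw [h0, han, Walk.getVert_zero]
        have hh := w.adj_getVert_succ (show n - 1 < w.length by omega)
        rw [show n - 1 + 1 = w.length by omega, Walk.getVert_length] at hh
        exact hh
    have hadjiff : ∀ i j : Fin n, G.Adj (e i) (e j) ↔ (cycGraph n).Adj i j := by
      intro i j
      rw [cyc_adj_iff hn3]
      constructor
      · intro hadj
        have hvne : i.val ≠ j.val := by
          intro hv
          rw [he] at hadj; dsimp only at hadj
          rw [hv] at hadj
          exact G.loopless.irrefl _ hadj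
        have hjlt := j.isLt
        have hilt := i.isLt
        rcases Nat.lt_or_ge i.val j.val with hlt | hge
        · rcases hchord i.val j.val hlt (by omega) hadj with h | ⟨ha1, ha2⟩
          · left; apply Fin.ext
            rw [fin_val_add_one hn3, Nat.mod_eq_of_lt (by omega)]
            exact h
          · right; apply Fin.ext
            rw [fin_val_add_one hn3, ha1, ha2, show n - 1 + 1 = n by omega,
              Nat.mod_self]
        · rcases hchord j.val i.val (by omega) (by omega) hadj.symm with h | ⟨ha1, ha2⟩
          · right; apply Fin.ext
            rw [fin_val_add_one hn3, Nat.mod_eq_of_lt (by omega)]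
            exact h
          · left; apply Fin.ext
            rw [fin_val_add_one hn3, ha1, ha2, show n - 1 + 1 = n by omega,
              Nat.mod_self]
      · rintro (rfl | rfl)
        · exact hstep i
        · exact (hstep j).symm
    let ψ : cycGraph n ≃g G :=
      { toEquiv := Equiv.ofBijective e ⟨heinj, hesurj⟩,
        map_rel_iff' := fun {a b} => hadjiff a b }
    exact ⟨n, hoddn, hn3, ⟨ψ.symm⟩⟩
  · rintro ⟨n, hodd, hn3, ⟨φ⟩⟩
    haveI : NeZero n := ⟨by omega⟩
    constructor
    · refine chrom_eq_three'
        (SimpleGraph.Colorable.of_hom φ.toHom (cyc_col3 hn3)) ?_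
      intro hc
      exact cyc_not_col2 hn3 hodd
        (SimpleGraph.Colorable.of_hom φ.symm.toHom hc)
    · intro L hcard hncol u v
      by_contra hne
      apply hncol
      obtain ⟨f', hmem', hprop'⟩ := cyc_choosable hn3 (fun i => L (φ.symm i))
        (fun i => by show (L (φ.symm i)).card = 2; have := hcard (φ.symm i); omega)
        ⟨φ u, φ v, by simpa using hne⟩
      refine ⟨fun x => f' (φ x), fun x => by simpa using hmem' (φ x), ?_⟩
      intro a b hab
      exact hprop' (φ a) (φ b) (φ.map_rel_iff.mpr hab)
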